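/- Let R be a commutative ring of prime characteristic p > 0. If R is F-pure regular, then for every nonzerodivisor c ∈ R there exists an integer e > 0 such that for every maximal ideal m of R, c does not belong to m^{[p^e]}, the ideal of R generated by the p^e-th powers of the elements of m. -/

import Mathlib

universe u v w

/-- `S` viewed as a module over itself via the `e`-th iterate of the Frobenius:
`a • x = a ^ (p ^ e) * x`.  This is the module `F^e_* S`. -/
def Frob (S : Type u) (_p _e : ℕ) : Type u := S

namespace Frob

variable {S : Type u} [CommRing S] {p e : ℕ}

instance : CommRing (Frob S p e) := inferInstanceAs (CommRing S)

/-- The identity map of `S`, viewed as a map `S → F^e_* S`. -/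
def of : S → Frob S p e := id

/-- The identity map of `S`, viewed as a map `F^e_* S → S`. -/
def toBase : Frob S p e → S := id

/-- The `e`-th iterate of the Frobenius, `x ↦ x ^ (p ^ e)`, as a ring homomorphism
`S →+* F^e_* S`. -/
def frobeniusTo (S : Type u) [CommRing S] (p e : ℕ) [Fact p.Prime] [CharP S p] :
    S →+* Frob S p e := (iterateFrobenius S p e : S →+* S)

instance [Fact p.Prime] [CharP S p] : Module S (Frob S p e) :=
  Module.compHom (Frob S p e) (frobeniusTo S p e)

@[simp] lemma smul_def [Fact p.Prime] [CharP S p] (a : S) (x : Frob S p e) :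
    a • x = of (a ^ p ^ e * toBase x) := rfl

end Frob

/-- A map of `R`-modules is pure if tensoring with any `R`-module preserves injectivity. -/
def IsPure {R : Type u} [CommRing R] {M : Type v} {N : Type w} [AddCommGroup M] [Module R M]
    [AddCommGroup N] [Module R N] (f : M →ₗ[R] N) : Prop :=
  ∀ (P : Type u) [AddCommGroup P] [Module R P], Function.Injective (LinearMap.lTensor P f)

/-- The `S`-linear map `λ^e_c : S → F^e_* S` sending `1` to `c`; as a map of sets it is
`x ↦ x ^ (p ^ e) * c`. -/
def lambdaMap (S : Type u) [CommRing S] (p : ℕ) [Fact p.Prime] [CharP S p] (e : ℕ) (c : S) :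
    S →ₗ[S] Frob S p e where
  toFun x := Frob.of (x ^ p ^ e * c)
  map_add' x y := by
    show Frob.of ((x + y) ^ p ^ e * c) = Frob.of (x ^ p ^ e * c + y ^ p ^ e * c)
    rw [add_pow_char_pow, add_mul]
  map_smul' a x := by
    show Frob.of ((a * x) ^ p ^ e * c) = a • Frob.of (x ^ p ^ e * c)
    rw [Frob.smul_def]
    show Frob.of ((a * x) ^ p ^ e * c) = Frob.of (a ^ p ^ e * (x ^ p ^ e * c))
    rw [mul_pow, mul_assoc]


open TensorProduct in
lemma nzd_not_mem_minimal {R : Type u} [CommRing R] {c : R} (hc : c ∈ nonZeroDivisors R)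
    {P : Ideal R} (hP : P ∈ minimalPrimes R) : c ∉ P := by
  intro hcP
  haveI : P.IsPrime := hP.1.1
  set S := Localization P.primeCompl
  have hnil : IsNilpotent (algebraMap R S c) := by
    have h := IsLocalization.AtPrime.radical_map_of_mem_minimalPrimes (A := S) P ⊥ hP
    rw [Ideal.map_bot] at h
    have hm : algebraMap R S c ∈ (⊥ : Ideal S).radical := h ▸ Ideal.mem_map_of_mem _ hcP
    obtain ⟨n, hn⟩ := hm
    exact ⟨n, by simpa using hn⟩
  obtain ⟨n, hn⟩ := hnil
  rw [← map_pow, ← map_zero (algebraMap R S),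
    IsLocalization.eq_iff_exists P.primeCompl S] at hn
  obtain ⟨s, hs⟩ := hn
  simp only [mul_zero] at hs
  have : (s : R) = 0 := (pow_mem hc n).2 s hs
  exact s.2 (this ▸ P.zero_mem)

/-- **F-pure regularity implies avoidance of Frobenius powers of maximal ideals.**
Let `R` be a commutative ring of prime characteristic `p`.  If `R` is F-pure regular (for
every `c` not in any minimal prime there is `e ≥ 1` with `λ^e_c : R → F^e_* R` pure), then for
every nonzerodivisor `c ∈ R` there is an `e ≥ 1` such that `c ∉ 𝔪^{[p^e]}` for every maximal
ideal `𝔪`, where `𝔪^{[p^e]}` is the ideal generated by the `p^e`-th powers of elements of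
`𝔪`. -/
theorem fpure_regular_implies_not_mem_frobenius_power
    (p : ℕ) [Fact p.Prime]
    (R : Type u) [CommRing R] [CharP R p]
    (hFpureRegular : ∀ c : R, (∀ P ∈ minimalPrimes R, c ∉ P) →
      ∃ e : ℕ, 1 ≤ e ∧ IsPure (lambdaMap R p e c)) :
    ∀ c ∈ nonZeroDivisors R, ∃ e : ℕ, 0 < e ∧ ∀ m : Ideal R, m.IsMaximal →
      c ∉ Ideal.span ((fun x => x ^ p ^ e) '' (m : Set R)) := by
  intro c hc
  obtain ⟨e, he, hpure⟩ := hFpureRegular c (fun P hP => nzd_not_mem_minimal hc hP)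
  refine ⟨e, he, fun m hm hmem => ?_⟩
  haveI : Nontrivial (R ⧸ m) := Ideal.Quotient.nontrivial_iff.mpr hm.ne_top
  have hinj := hpure (R ⧸ m)
  have key : (1 : R ⧸ m) ⊗ₜ[R] (Frob.of c : Frob R p e) = 0 := by
    obtain ⟨d, hsupp, hsum⟩ := Submodule.mem_span_set.mp hmem
    rw [← hsum, Finsupp.sum]
    have h3 : (Frob.of (∑ g ∈ d.support, d g • g) : Frob R p e)
        = ∑ g ∈ d.support, (Frob.of (d g • g) : Frob R p e) := rfl
    rw [h3, TensorProduct.tmul_sum]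
    refine Finset.sum_eq_zero fun g hg => ?_
    obtain ⟨x, hx, rfl⟩ := hsupp hg
    have h1 : (Frob.of (d (x ^ p ^ e) • x ^ p ^ e) : Frob R p e)
        = x • (Frob.of (d (x ^ p ^ e)) : Frob R p e) := by
      rw [Frob.smul_def]
      show Frob.of (d (x ^ p ^ e) * x ^ p ^ e) = Frob.of (x ^ p ^ e * d (x ^ p ^ e))
      rw [mul_comm]
    rw [h1, ← TensorProduct.smul_tmul]
    have h2 : x • (1 : R ⧸ m) = 0 := by
      have h : (1 : R ⧸ m) = Submodule.Quotient.mk (1 : R) := rfl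
      rw [h, ← Submodule.Quotient.mk_smul, smul_eq_mul, mul_one, Submodule.Quotient.mk_eq_zero]
      exact hx
    rw [h2, TensorProduct.zero_tmul]
  have heval : LinearMap.lTensor (R ⧸ m) (lambdaMap R p e c)
      ((1 : R ⧸ m) ⊗ₜ[R] (1 : R)) = 0 := by
    rw [LinearMap.lTensor_tmul]
    have h4 : lambdaMap R p e c 1 = (Frob.of c : Frob R p e) := by
      show Frob.of (1 ^ p ^ e * c) = Frob.of c
      rw [one_pow, one_mul]
    rw [h4, key]
  have h0 : (1 : R ⧸ m) ⊗ₜ[R] (1 : R) = (0 : TensorProduct R (R ⧸ m) R) := by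
    apply hinj
    rw [heval, map_zero]
  have h5 := congrArg (TensorProduct.rid R (R ⧸ m)) h0
  rw [TensorProduct.rid_tmul, map_zero, one_smul] at h5
  exact one_ne_zero h5
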